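/- Let O₁ and O₂ be nonempty sets and O = O₁ × O₂, with preorders ≽₁ on Δ(O₁), ≽₂ on Δ(O₂), and a preorder ≽ on Δ(O). Suppose that for each i ∈ {1,2} there are aᵢ, bᵢ, cᵢ, dᵢ ∈ Oᵢ with δ_{aᵢ} ≻ᵢ δ_{bᵢ} ≻ᵢ δ_{cᵢ} ≻ᵢ δ_{dᵢ} and with the uniform lottery aᵢ/dᵢ ∼ᵢ δ_{bᵢ}. Then ≽ cannot simultaneously satisfy Pareto, Converse Pareto, Unanimous Equivalence, and Negative Dominance. -/

import Mathlib

open scoped BigOperators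

noncomputable section

/-- A finite-support lottery on `X`. -/
structure Lottery (X : Type*) where
  val : X →₀ ℝ
  nonneg : ∀ x, 0 ≤ val x
  total : val.sum (fun _ p => p) = 1

namespace Lottery

variable {X : Type*}

/-- The point-mass lottery at `x`. -/
def delta (x : X) : Lottery X where
  val := Finsupp.single x 1
  nonneg := fun y => by
    classical
    rw [Finsupp.single_apply]
    split <;> norm_num
  total := by
    rw [Finsupp.sum_single_index rfl]

/-- The mixture `α • f + (1 - α) • g`. -/
def mix (α : ℝ) (h1 : 0 ≤ α) (h2 : α ≤ 1) (f g : Lottery X) : Lottery X where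
  val := α • f.val + (1 - α) • g.val
  nonneg := fun x => by
    have hf := f.nonneg x
    have hg := g.nonneg x
    simp only [Finsupp.coe_add, Finsupp.coe_smul, Pi.add_apply, Pi.smul_apply, smul_eq_mul]
    nlinarith
  total := by
    rw [Finsupp.sum_add_index' (fun _ => rfl) (fun _ _ _ => rfl)]
    rw [Finsupp.sum_smul_index (fun _ => rfl), Finsupp.sum_smul_index (fun _ => rfl)]
    rw [← Finsupp.mul_sum, ← Finsupp.mul_sum, f.total, g.total]
    ring

/-- The uniform lottery on `a` and `b`, written `a/b` in the paper. -/
def unif (a b : X) : Lottery X := mix (1/2) (by norm_num) (by norm_num) (delta a) (delta b)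

/-- Strict preference. -/
def SPref (R : Lottery X → Lottery X → Prop) (f g : Lottery X) : Prop := R f g ∧ ¬ R g f

/-- Indifference. -/
def Indiff (R : Lottery X → Lottery X → Prop) (f g : Lottery X) : Prop := R f g ∧ R g f

/-- Incomparability. -/
def Incomp (R : Lottery X → Lottery X → Prop) (f g : Lottery X) : Prop := ¬ R f g ∧ ¬ R g f

/-- Negative Dominance. -/
def NegDominance (R : Lottery X → Lottery X → Prop) : Prop :=
  ∀ f g : Lottery X, SPref R f g →
    ∃ o ∈ f.val.support, ∃ o' ∈ g.val.support, SPref R (delta o) (delta o')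

/-- Independence. -/
def Independence (R : Lottery X → Lottery X → Prop) : Prop :=
  ∀ f g h : Lottery X, ∀ α : ℝ, ∀ (h1 : 0 < α) (h2 : α < 1),
    (R f g ↔ R (mix α h1.le h2.le f h) (mix α h1.le h2.le g h))

/-- The coordinatewise expectation of a lottery on `ℝ²`. -/
def expLot (f : Lottery (ℝ × ℝ)) : ℝ × ℝ :=
  (f.val.sum fun o p => p * o.1, f.val.sum fun o p => p * o.2)

/-- Pareto. -/
def Pareto (R : Lottery (ℝ × ℝ) → Lottery (ℝ × ℝ) → Prop) : Prop :=
  ∀ x y x' y' : ℝ, x' ≤ x → y' ≤ y → R (delta (x, y)) (delta (x', y'))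

/-- Converse Pareto. -/
def ConvPareto (R : Lottery (ℝ × ℝ) → Lottery (ℝ × ℝ) → Prop) : Prop :=
  ∀ x y x' y' : ℝ, R (delta (x, y)) (delta (x', y')) → x' ≤ x ∧ y' ≤ y

/-- Two outcomes are unidimensional with each other if they differ in at most one coordinate. -/
def UniWith {A B : Type*} (o o' : A × B) : Prop := o.1 = o'.1 ∨ o.2 = o'.2

/-- A lottery is unidimensional if any two outcomes in its support are unidimensional
with each other. -/
def Unidim {A B : Type*} (f : Lottery (A × B)) : Prop :=
  ∀ o ∈ f.val.support, ∀ o' ∈ f.val.support, UniWith o o'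

/-- Expectationalism. -/
def Expectationalism (R : Lottery (ℝ × ℝ) → Lottery (ℝ × ℝ) → Prop) : Prop :=
  ∀ f, Indiff R f (delta (expLot f))

/-- Unidimensional Expectations. -/
def UnidimExp (R : Lottery (ℝ × ℝ) → Lottery (ℝ × ℝ) → Prop) : Prop :=
  ∀ f, Unidim f → Indiff R f (delta (expLot f))

end Lottery

open Lottery

/-- Qualitative Pareto. -/
def QPareto {O₁ O₂ : Type*} (R1 : Lottery O₁ → Lottery O₁ → Prop)
    (R2 : Lottery O₂ → Lottery O₂ → Prop)
    (R : Lottery (O₁ × O₂) → Lottery (O₁ × O₂) → Prop) : Prop :=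
  ∀ o₁ o₁' : O₁, ∀ o₂ o₂' : O₂,
    R1 (delta o₁) (delta o₁') → R2 (delta o₂) (delta o₂') →
      R (delta (o₁, o₂)) (delta (o₁', o₂'))

/-- Qualitative Converse Pareto. -/
def QConvPareto {O₁ O₂ : Type*} (R1 : Lottery O₁ → Lottery O₁ → Prop)
    (R2 : Lottery O₂ → Lottery O₂ → Prop)
    (R : Lottery (O₁ × O₂) → Lottery (O₁ × O₂) → Prop) : Prop :=
  ∀ o₁ o₁' : O₁, ∀ o₂ o₂' : O₂,
    R (delta (o₁, o₂)) (delta (o₁', o₂')) →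
      R1 (delta o₁) (delta o₁') ∧ R2 (delta o₂) (delta o₂')

/-- Unanimous Equivalence. -/
def UnanEquiv {O₁ O₂ : Type*} (R1 : Lottery O₁ → Lottery O₁ → Prop)
    (R2 : Lottery O₂ → Lottery O₂ → Prop)
    (R : Lottery (O₁ × O₂) → Lottery (O₁ × O₂) → Prop) : Prop :=
  ∀ α : ℝ, ∀ (h1 : 0 ≤ α) (h2 : α ≤ 1), ∀ a₁ b₁ c₁ : O₁, ∀ a₂ b₂ c₂ : O₂,
    Indiff R1 (mix α h1 h2 (delta a₁) (delta c₁)) (delta b₁) →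
    Indiff R2 (mix α h1 h2 (delta a₂) (delta c₂)) (delta b₂) →
    Indiff R (mix α h1 h2 (delta (a₁, a₂)) (delta (c₁, c₂))) (delta (b₁, b₂))

lemma Lottery.ext' {X : Type*} {f g : Lottery X} (h : f.val = g.val) : f = g := by
  cases f; cases g; cases h; rfl

lemma mix_half_comm {X : Type*} (f g : Lottery X) :
    mix (1/2) (by norm_num) (by norm_num) f g
      = mix (1/2) (by norm_num) (by norm_num) g f := by
  apply Lottery.ext'
  show (1/2 : ℝ) • f.val + (1 - 1/2) • g.val = (1/2 : ℝ) • g.val + (1 - 1/2) • f.val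
  norm_num [add_comm]

lemma mem_support_mix_delta {X : Type*} (a b o : X) {h1 : (0:ℝ) ≤ 1/2} {h2 : (1:ℝ)/2 ≤ 1}
    (ho : o ∈ (mix (1/2) h1 h2 (delta a) (delta b)).val.support) : o = a ∨ o = b := by
  classical
  by_contra hcon
  push_neg at hcon
  rw [Finsupp.mem_support_iff] at ho
  apply ho
  simp only [mix, delta, Finsupp.coe_add, Finsupp.coe_smul, Pi.add_apply, Pi.smul_apply,
    smul_eq_mul, Finsupp.single_apply]
  rw [if_neg (fun h => hcon.1 h.symm), if_neg (fun h => hcon.2 h.symm)]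
  ring

lemma mem_support_delta {X : Type*} {x o : X} (ho : o ∈ (delta x).val.support) : o = x := by
  classical
  rw [Finsupp.mem_support_iff] at ho
  by_contra h
  exact ho (Finsupp.single_eq_of_ne' (fun hh => h hh.symm))

/-- qualitative inconsistency of Pareto, Converse Pareto, Unanimous
Equivalence, and Negative Dominance, given four strictly ordered elements in each
dimension with `aᵢ/dᵢ ∼ᵢ δ_{bᵢ}`. -/
theorem statement15 {O₁ O₂ : Type*} [Nonempty O₁] [Nonempty O₂]
    (R1 : Lottery O₁ → Lottery O₁ → Prop) (R2 : Lottery O₂ → Lottery O₂ → Prop)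
    (R : Lottery (O₁ × O₂) → Lottery (O₁ × O₂) → Prop)
    (h1r : Reflexive R1) (h1t : Transitive R1)
    (h2r : Reflexive R2) (h2t : Transitive R2)
    (hr : Reflexive R) (ht : Transitive R)
    (hex1 : ∃ a b c d : O₁, SPref R1 (delta a) (delta b) ∧ SPref R1 (delta b) (delta c) ∧
      SPref R1 (delta c) (delta d) ∧ Indiff R1 (unif a d) (delta b))
    (hex2 : ∃ a b c d : O₂, SPref R2 (delta a) (delta b) ∧ SPref R2 (delta b) (delta c) ∧
      SPref R2 (delta c) (delta d) ∧ Indiff R2 (unif a d) (delta b)) :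
    ¬ (QPareto R1 R2 R ∧ QConvPareto R1 R2 R ∧ UnanEquiv R1 R2 R ∧ NegDominance R) := by
  rintro ⟨hP, hCP, hUE, hND⟩
  obtain ⟨a₁, b₁, c₁, d₁, hab1, hbc1, hcd1, had1⟩ := hex1
  obtain ⟨a₂, b₂, c₂, d₂, hab2, hbc2, hcd2, had2⟩ := hex2
  have hhalf1 : (0:ℝ) ≤ 1/2 := by norm_num
  have hhalf2 : (1:ℝ)/2 ≤ 1 := by norm_num
  -- second-coordinate indifference with order swapped
  have had2' : Indiff R2 (mix (1/2) hhalf1 hhalf2 (delta d₂) (delta a₂)) (delta b₂) := by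
    rw [mix_half_comm]
    exact had2
  -- f' = ½ δ(a₁,d₂) + ½ δ(d₁,a₂) ∼ δ(b₁,b₂)
  have hf' : Indiff R (mix (1/2) hhalf1 hhalf2 (delta (a₁, d₂)) (delta (d₁, a₂)))
      (delta (b₁, b₂)) := hUE (1/2) hhalf1 hhalf2 a₁ b₁ d₁ d₂ b₂ a₂ had1 had2'
  set f' := mix (1/2) hhalf1 hhalf2 (delta (a₁, d₂)) (delta (d₁, a₂)) with hf'def
  -- δ(b₁,b₂) ≻ δ(c₁,c₂)
  have hbRc : R (delta (b₁, b₂)) (delta (c₁, c₂)) := hP b₁ c₁ b₂ c₂ hbc1.1 hbc2.1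
  have hncRb : ¬ R (delta (c₁, c₂)) (delta (b₁, b₂)) := fun h =>
    hbc1.2 (hCP c₁ b₁ c₂ b₂ h).1
  -- f' ≻ δ(c₁,c₂)
  have hSP : SPref R f' (delta (c₁, c₂)) := by
    constructor
    · exact ht hf'.1 hbRc
    · intro h
      exact hncRb (ht h hf'.1)
  obtain ⟨o, ho, o', ho', hoo'⟩ := hND f' (delta (c₁, c₂)) hSP
  have ho'eq : o' = (c₁, c₂) := mem_support_delta ho'
  subst ho'eq
  rcases mem_support_mix_delta (a₁, d₂) (d₁, a₂) o ho with h | h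
  · subst h
    exact hcd2.2 (hCP a₁ c₁ d₂ c₂ hoo'.1).2
  · subst h
    exact hcd1.2 (hCP d₁ c₁ a₂ c₂ hoo'.1).1
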